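/- For every integer d ≥ 1, in any red-blue d-colouring of a connected P4-free graph, one of the two colour classes has size at most 2d. -/

import Mathlib

open SimpleGraph

def IsRBColouring {V : Type*} (G : SimpleGraph V) (d : ℕ) (c : V → Bool) : Prop :=
  (∃ v, c v = true) ∧ (∃ v, c v = false) ∧
    ∀ v, {u | G.Adj v u ∧ c u ≠ c v}.ncard ≤ d

/-- `a,b,c,d` form an induced path on 4 vertices in `G`. -/
def IsInducedP4 {V : Type*} (G : SimpleGraph V) (a b c d : V) : Prop :=
  G.Adj a b ∧ G.Adj b c ∧ G.Adj c d ∧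
  ¬G.Adj a c ∧ ¬G.Adj a d ∧ ¬G.Adj b d ∧
  a ≠ c ∧ a ≠ d ∧ b ≠ d

def P4Free {V : Type*} (G : SimpleGraph V) : Prop :=
  ¬∃ a b c d : V, IsInducedP4 G a b c d

universe u

section Helpers

variable {V : Type*} {G : SimpleGraph V}

lemma p4free_compl (h : P4Free G) : P4Free Gᶜ := by
  rintro ⟨a, b, c, d, hab, hbc, hcd, hac, had, hbd, hac', had', hbd'⟩
  refine h ⟨b, d, a, c, ?_, ?_, ?_, ?_, ?_, ?_, ?_, ?_, ?_⟩
  · by_contra hx; exact hbd ⟨hbd', hx⟩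
  · by_contra hx; exact had ⟨had', fun h' => hx h'.symm⟩
  · by_contra hx; exact hac ⟨hac', hx⟩
  · exact fun h' => hab.2 h'.symm
  · exact fun h' => hbc.2 h'
  · exact fun h' => hcd.2 h'.symm
  · exact fun h' => hab.1 h'.symm
  · exact hbc.1
  · exact fun h' => hcd.1 h'.symm

lemma p4free_induce {s : Set V} (h : P4Free G) : P4Free (G.induce s) := by
  rintro ⟨a, b, c, d, hab, hbc, hcd, hac, had, hbd, hac', had', hbd'⟩
  exact h ⟨a, b, c, d, hab, hbc, hcd, hac, had, hbd,
    fun e => hac' (Subtype.ext e), fun e => had' (Subtype.ext e), fun e => hbd' (Subtype.ext e)⟩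

lemma compl_induce (s : Set V) : (G.induce s)ᶜ = Gᶜ.induce s := by
  ext a b
  simp only [compl_adj, comap_adj, Function.Embedding.coe_subtype, ne_eq, Subtype.ext_iff]

lemma exists_adj_of_reachable {a b : V} (h : G.Reachable a b) (hne : a ≠ b) :
    ∃ z, G.Adj a z := by
  obtain ⟨W⟩ := h
  cases W with
  | nil => exact absurd rfl hne
  | cons h _ => exact ⟨_, h⟩

lemma lemB (G : SimpleGraph V) :
    ∀ (u v : V) (_ : G.Walk u v) (hu : u ∈ ({v}ᶜ : Set V)),
    ∃ x, ∃ hx : x ∈ ({v}ᶜ : Set V), G.Adj v x ∧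
      (G.induce ({v}ᶜ : Set V)).Reachable ⟨u, hu⟩ ⟨x, hx⟩ := by
  intro u v W
  induction W with
  | nil => intro hu; simp at hu
  | @cons u u' v h W ih =>
    intro hu
    by_cases hu' : u' = v
    · exact ⟨u, hu, (hu' ▸ h).symm, Reachable.refl _⟩
    · obtain ⟨x, hx, hadj, hr⟩ := ih hu'
      exact ⟨x, hx, hadj, (Adj.reachable (by simpa using h : (G.induce ({v}ᶜ : Set V)).Adj ⟨u, hu⟩ ⟨u', hu'⟩)).trans hr⟩

lemma lemC {W' : Type*} (H : SimpleGraph W') (P : W' → Prop) :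
    ∀ (a w : W'), H.Walk a w → P a → ¬P w →
    ∃ x y, H.Adj y x ∧ ¬P x ∧ P y ∧ H.Reachable a y ∧ H.Reachable a x := by
  intro a w W
  induction W with
  | nil => intro hp hnp; exact absurd hp hnp
  | @cons a u _ h W ih =>
    intro hp hnp
    by_cases hu : P u
    · obtain ⟨x, y, hxy, hx, hy, hry, hrx⟩ := ih hu hnp
      exact ⟨x, y, hxy, hx, hy, h.reachable.trans hry, h.reachable.trans hrx⟩
    · exact ⟨u, a, h, hu, hp, Reachable.refl _, h.reachable⟩

lemma findP4 (G : SimpleGraph V) (hG : G.Connected) (hGc : Gᶜ.Connected) (v : V)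
    (hnp : ¬ (G.induce ({v}ᶜ : Set V)).Preconnected) :
    ∃ a b c d, IsInducedP4 G a b c d := by
  set s : Set V := {v}ᶜ with hs
  set H := G.induce s with hH
  obtain ⟨p, q, hpq⟩ : ∃ p q : s, ¬H.Reachable p q := by
    by_contra hx; push_neg at hx; exact hnp hx
  -- find a non-neighbour of v
  obtain ⟨w, hwv, hwadj⟩ : ∃ w, w ≠ v ∧ ¬G.Adj v w := by
    by_contra hx
    push_neg at hx
    have hpv : (p : V) ≠ v := p.2
    obtain ⟨z, hz⟩ := exists_adj_of_reachable (hGc.preconnected v p.val) (Ne.symm hpv)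
    rw [compl_adj] at hz
    exact hz.2 (hx z (Ne.symm hz.1))
  have hws : w ∈ s := by simp [hs, hwv]
  -- a side t not reachable from w
  have htt : ¬H.Reachable ⟨w, hws⟩ p ∨ ¬H.Reachable ⟨w, hws⟩ q := by
    by_contra hx
    push_neg at hx
    exact hpq (hx.1.symm.trans hx.2)
  obtain ⟨t, ht⟩ : ∃ t : s, ¬H.Reachable ⟨w, hws⟩ t := htt.elim (⟨p, ·⟩) (⟨q, ·⟩)
  -- neighbours of v reachable from w and from t
  obtain ⟨aw, haws, hawadj, hawr⟩ := lemB G w v (hG.preconnected w v).some hws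
  obtain ⟨at', hats, hatadj, hatr⟩ := lemB G t.val v (hG.preconnected t.val v).some t.2
  have hatr' : H.Reachable t ⟨at', hats⟩ := by
    have := hatr
    rwa [Subtype.eta] at this
  -- split an H-walk from aw to w at the boundary of N(v)
  obtain ⟨x, y, hxy, hx, hy, hry, hrx⟩ :=
    lemC H (fun z => G.Adj v z.val) ⟨aw, haws⟩ ⟨w, hws⟩
      (hawr.symm.some) hawadj hwadj
  have hwrx : H.Reachable ⟨w, hws⟩ x := hawr.trans hrx
  have hwry : H.Reachable ⟨w, hws⟩ y := hawr.trans hry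
  refine ⟨x, y, v, at', ?_, hy.symm, hatadj, ?_, ?_, ?_, ?_, ?_, ?_⟩
  · exact hxy.symm
  · exact fun h => hx h.symm
  · intro h
    have hadj : H.Adj x ⟨at', hats⟩ := h
    exact ht ((hwrx.trans hadj.reachable).trans hatr'.symm)
  · intro h
    have hadj : H.Adj y ⟨at', hats⟩ := h
    exact ht ((hwry.trans hadj.reachable).trans hatr'.symm)
  · have : (x : V) ≠ v := x.2
    exact this
  · intro e
    have : x = ⟨at', hats⟩ := Subtype.ext e
    exact ht (this ▸ hwrx |>.trans hatr'.symm)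
  · intro e
    have : y = ⟨at', hats⟩ := Subtype.ext e
    exact ht (this ▸ hwry |>.trans hatr'.symm)

end Helpers

lemma key : ∀ (n : ℕ) (V : Type u) [Fintype V] (G : SimpleGraph V), Fintype.card V = n →
    G.Connected → Gᶜ.Connected → P4Free G → Fintype.card V ≤ 1 := by
  intro n
  induction n using Nat.strong_induction_on with
  | _ n ih =>
    intro V _ G hn hG hGc hP4
    by_contra hcard
    push_neg at hcard
    classical
    have hnt : Nontrivial V := Fintype.one_lt_card_iff_nontrivial.mp hcard
    obtain ⟨v, u, hvu⟩ := hnt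
    rcases eq_or_lt_of_le (show 2 ≤ Fintype.card V from hcard) with h2 | h3
    · -- card V = 2
      have huniq : ∀ a b : V, a ≠ v → b ≠ v → a = b := by
        intro a b ha hb
        by_contra hab
        have : 2 < Fintype.card V := Fintype.two_lt_card_iff.mpr ⟨v, a, b, Ne.symm ha, Ne.symm hb, hab⟩
        omega
      obtain ⟨z, hz⟩ := exists_adj_of_reachable (hG.preconnected v u) hvu
      obtain ⟨z', hz'⟩ := exists_adj_of_reachable (hGc.preconnected v u) hvu
      rw [compl_adj] at hz'
      have : z = z' := huniq z z' (fun e => G.loopless.irrefl v (e ▸ hz)) (Ne.symm hz'.1)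
      exact hz'.2 (this ▸ hz)
    · -- card V ≥ 3
      set s : Set V := {v}ᶜ with hs
      by_cases hH : (G.induce s).Preconnected
      · by_cases hHc : (Gᶜ.induce s).Preconnected
        · have hus : u ∈ s := Ne.symm hvu
          have hsne : Nonempty ↥s := ⟨⟨u, hus⟩⟩
          haveI := hsne
          have hconn : (G.induce s).Connected := Connected.mk hH
          have hconnc : (G.induce s)ᶜ.Connected := by
            rw [compl_induce]; exact Connected.mk hHc
          have hvns : v ∉ s := by simp [hs]
          have hcards : Fintype.card ↥s < n := hn ▸ Fintype.card_subtype_lt (x := v) hvns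
          have hle := ih _ hcards ↥s (G.induce s) rfl hconn hconnc (p4free_induce hP4)
          have hceq : Fintype.card ↥s = Fintype.card V - 1 := by
            have h1 := Fintype.card_compl_set ({v} : Set V)
            rw [Set.card_singleton] at h1
            exact h1
          omega
        · obtain ⟨a, b, c', d, h4⟩ := findP4 Gᶜ hGc (by rwa [compl_compl]) v hHc
          exact p4free_compl hP4 ⟨a, b, c', d, h4⟩
      · exact hP4 (findP4 G hG hGc v hH)

theorem stmt1 {V : Type*} [Fintype V] (G : SimpleGraph V) (hG : G.Connected)
    (hP4 : P4Free G) (d : ℕ) (hd : 1 ≤ d) (c : V → Bool)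
    (hc : IsRBColouring G d c) :
    {v | c v = true}.ncard ≤ 2 * d ∨ {v | c v = false}.ncard ≤ 2 * d := by
  classical
  by_contra h
  push_neg at h
  obtain ⟨h1, h2⟩ := h
  obtain ⟨⟨vt, hvt⟩, ⟨vf, hvf⟩, hdeg⟩ := hc
  have hnt : Nontrivial V :=
    ⟨vt, vf, by intro e; rw [e, hvf] at hvt; exact Bool.noConfusion hvt⟩
  have hnc : ¬ Gᶜ.Connected := by
    intro hGc
    have := key (Fintype.card V) V G rfl hG hGc hP4
    have := Fintype.one_lt_card (α := V)
    omega
  obtain ⟨p, q, hpq⟩ : ∃ p q, ¬ Gᶜ.Reachable p q := by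
    by_contra hx
    push_neg at hx
    exact hnc (Connected.mk hx)
  set X : Set V := {x | Gᶜ.Reachable p x} with hX
  have hpX : p ∈ X := Reachable.refl p
  have hqX : q ∉ X := hpq
  have hcross : ∀ x ∈ X, ∀ y ∉ X, G.Adj x y := by
    intro x hx y hy
    by_contra hadj
    have hne : x ≠ y := fun e => hy (e ▸ hx)
    exact hy (Reachable.trans hx (Adj.reachable ((compl_adj G x y).mpr ⟨hne, hadj⟩)))
  have cntX : ∀ x ∈ X, ({y | y ∉ X ∧ c y ≠ c x}).ncard ≤ d := by
    intro x hx
    refine le_trans (Set.ncard_le_ncard ?_ (Set.toFinite _)) (hdeg x)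
    rintro y ⟨hy, hcy⟩
    exact ⟨hcross x hx y hy, hcy⟩
  have cntY : ∀ y, y ∉ X → ({x | x ∈ X ∧ c x ≠ c y}).ncard ≤ d := by
    intro y hy
    refine le_trans (Set.ncard_le_ncard ?_ (Set.toFinite _)) (hdeg y)
    rintro x ⟨hx, hcx⟩
    exact ⟨(hcross x hx y hy).symm, hcx⟩
  have main : ∀ b : Bool, (∃ x ∈ X, c x = !b) → (∃ y, y ∉ X ∧ c y = !b) →
      {v | c v = b}.ncard ≤ 2 * d := by
    rintro b ⟨x, hx, hcx⟩ ⟨y, hy, hcy⟩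
    have hsplit : {v | c v = b} ⊆ {z | z ∈ X ∧ c z ≠ c y} ∪ {z | z ∉ X ∧ c z ≠ c x} := by
      intro z hz
      simp only [Set.mem_setOf_eq] at hz
      by_cases hzX : z ∈ X
      · left; exact ⟨hzX, by rw [hz, hcy]; simp⟩
      · right; exact ⟨hzX, by rw [hz, hcx]; simp⟩
    calc {v | c v = b}.ncard ≤ ({z | z ∈ X ∧ c z ≠ c y} ∪ {z | z ∉ X ∧ c z ≠ c x}).ncard :=
          Set.ncard_le_ncard hsplit (Set.toFinite _)
      _ ≤ ({z | z ∈ X ∧ c z ≠ c y}).ncard + ({z | z ∉ X ∧ c z ≠ c x}).ncard :=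
          Set.ncard_union_le _ _
      _ ≤ d + d := Nat.add_le_add (cntY y hy) (cntX x hx)
      _ = 2 * d := by ring
  by_cases hXm : ∀ x ∈ X, c x = c p
  · have hbound : {v | c v = !(c p)}.ncard ≤ d := by
      refine le_trans (Set.ncard_le_ncard ?_ (Set.toFinite _)) (cntX p hpX)
      intro z hz
      simp only [Set.mem_setOf_eq] at hz ⊢
      constructor
      · intro hzX; have := hXm z hzX; rw [hz] at this; simp at this
      · rw [hz]; simp
    cases hb : c p
    · rw [hb] at hbound; simp at hbound; omega
    · rw [hb] at hbound; simp at hbound; omega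
  · by_cases hYm : ∀ y, y ∉ X → c y = c q
    · have hbound : {v | c v = !(c q)}.ncard ≤ d := by
        refine le_trans (Set.ncard_le_ncard ?_ (Set.toFinite _)) (cntY q hqX)
        intro z hz
        simp only [Set.mem_setOf_eq] at hz ⊢
        constructor
        · by_contra hzX; have := hYm z hzX; rw [hz] at this; simp at this
        · rw [hz]; simp
      cases hb : c q
      · rw [hb] at hbound; simp at hbound; omega
      · rw [hb] at hbound; simp at hbound; omega
    · push_neg at hXm hYm
      obtain ⟨x1, hx1X, hx1⟩ := hXm
      obtain ⟨y1, hy1X, hy1⟩ := hYm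
      have hXt : ∃ x ∈ X, c x = true := by
        cases hcp : c p
        · refine ⟨x1, hx1X, ?_⟩
          cases hcx1 : c x1
          · rw [hcp, hcx1] at hx1; simp at hx1
          · rfl
        · exact ⟨p, hpX, hcp⟩
      have hYt : ∃ y, y ∉ X ∧ c y = true := by
        cases hcq : c q
        · refine ⟨y1, hy1X, ?_⟩
          cases hcy1 : c y1
          · rw [hcq, hcy1] at hy1; simp at hy1
          · rfl
        · exact ⟨q, hqX, hcq⟩
      have := main false (by simpa using hXt) (by simpa using hYt)
      omega
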